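/- Let m = Δ_1 + ⋯ + Δ_N be a regular multisegment with Δ_i = [a_i; b_i] and b_1 > b_2 > ⋯ > b_N. Fix i with X_{Δ_i,m} nonempty and write X_{Δ_i,m} = {j_1 > j_2 > ⋯ > j_m}. If f : X_{Δ_i,m} → Y_{Δ_i,m} is any injective function satisfying Δ_{f(j)} ≺ Δ_j for all j ∈ X_{Δ_i,m}, then necessarily f(j_1) = i and f(j_{ℓ+1}) = j_ℓ for all 1 ≤ ℓ ≤ m−1. -/

import Mathlib

/-- A segment `[a;b]` is a pair of integers `a ≤ b`. -/
structure Segment where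
  a : ℤ
  b : ℤ
  le : a ≤ b

namespace Segment

/-- `Δ ≺ Δ'` : the segment `Δ = [a;b]` precedes `Δ' = [c;d]`,
i.e. `a < c`, `c - 1 ≤ b` and `b < d`. -/
def prec (Δ Δ' : Segment) : Prop :=
  Δ.a < Δ'.a ∧ Δ'.a - 1 ≤ Δ.b ∧ Δ.b < Δ'.b

/-- `←Δ = [a-1; b-1]`. -/
def shift (Δ : Segment) : Segment :=
  ⟨Δ.a - 1, Δ.b - 1, by have := Δ.le; omega⟩

instance (Δ Δ' : Segment) : Decidable (Δ.prec Δ') := by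
  unfold prec; infer_instance

end Segment

/-- A multisegment (given as an indexed family of segments) is regular if the beginnings
of its segments are pairwise distinct and the ends of its segments are pairwise distinct. -/
def Regular {ι : Type*} (Δ : ι → Segment) : Prop :=
  (∀ i j : ι, (Δ i).a = (Δ j).a → i = j) ∧ (∀ i j : ι, (Δ i).b = (Δ j).b → i = j)

/-- The condition `LC(Δ₀, m)` : there is an injective function
`f : X_{Δ₀,m} → Y_{Δ₀,m}` with `Δ_{f i} ≺ Δ_i` for all `i ∈ X_{Δ₀,m}`,
where `X_{Δ₀,m} = {i | Δ₀ ≺ Δ_i}` and `Y_{Δ₀,m} = {i | ←Δ₀ ≺ Δ_i}`. -/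
def LC {ι : Type*} (Δ₀ : Segment) (Δ : ι → Segment) : Prop :=
  ∃ f : ι → ι, Set.InjOn f {i | Δ₀.prec (Δ i)} ∧
    ∀ i : ι, Δ₀.prec (Δ i) → Δ₀.shift.prec (Δ (f i)) ∧ (Δ (f i)).prec (Δ i)

/-- The condition `RC(Δ₀, m)` : there is an injective function
`f : X̃_{Δ₀,m} → Ỹ_{Δ₀,m}` with `Δ_i ≺ Δ_{f i}` for all `i ∈ X̃_{Δ₀,m}`,
where `X̃_{Δ₀,m} = {i | Δ_i ≺ Δ₀}` and `Ỹ_{Δ₀,m} = {i | ←Δ_i ≺ Δ₀}`. -/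
def RC {ι : Type*} (Δ₀ : Segment) (Δ : ι → Segment) : Prop :=
  ∃ f : ι → ι, Set.InjOn f {i | (Δ i).prec Δ₀} ∧
    ∀ i : ι, (Δ i).prec Δ₀ → (Δ (f i)).shift.prec Δ₀ ∧ (Δ i).prec (Δ (f i))

/-- For an ordered regular multisegment `m = Δ_1 + ⋯ + Δ_N` (with `b_1 > ⋯ > b_N`), fix `i`
with `X_{Δ_i,m}` nonempty, enumerated as `X_{Δ_i,m} = {j_1 > j_2 > ⋯ > j_M}` (here `j`
is a strictly decreasing enumeration). Then any injective function
`f : X_{Δ_i,m} → Y_{Δ_i,m}` with `Δ_{f(j)} ≺ Δ_j` on `X_{Δ_i,m}` satisfies `f(j_1) = i`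
and `f(j_{ℓ+1}) = j_ℓ` for all `1 ≤ ℓ ≤ M - 1`. -/
theorem statement3 {N M : ℕ} (Δ : Fin N → Segment) (hreg : Regular Δ)
    (hb : ∀ i j : Fin N, i < j → (Δ j).b < (Δ i).b)
    (i : Fin N) (hM : 0 < M)
    (j : Fin M → Fin N) (hjanti : StrictAnti j)
    (hjrange : ∀ k : Fin N, (Δ i).prec (Δ k) ↔ ∃ l : Fin M, j l = k)
    (f : Fin N → Fin N)
    (hfinj : Set.InjOn f {k | (Δ i).prec (Δ k)})
    (hf : ∀ k : Fin N, (Δ i).prec (Δ k) →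
      (Δ i).shift.prec (Δ (f k)) ∧ (Δ (f k)).prec (Δ k)) :
    f (j ⟨0, hM⟩) = i ∧
    ∀ (l : ℕ) (h : l + 1 < M), f (j ⟨l + 1, h⟩) = j ⟨l, by omega⟩ := by
  obtain ⟨hrega, hregb⟩ := hreg
  have hfin : ∀ k, (Δ i).prec (Δ k) → f k = i ∨ ((Δ i).prec (Δ (f k)) ∧ k < f k) := by
    intro k hk
    obtain ⟨⟨h1a, h1b, h1c⟩, ⟨h2a, h2b, h2c⟩⟩ := hf k hk
    simp only [Segment.shift] at h1a h1b h1c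
    by_cases hbe : (Δ (f k)).b = (Δ i).b
    · exact Or.inl (hregb _ _ hbe)
    · right
      have hane : (Δ (f k)).a ≠ (Δ i).a := fun h => hbe (by rw [hrega _ _ h])
      refine ⟨⟨by omega, by omega, by omega⟩, ?_⟩
      rcases lt_trichotomy k (f k) with h | h | h
      · exact h
      · exfalso; rw [← h] at h2c; omega
      · exfalso; exact absurd (hb _ _ h) (by omega)
  have hjX : ∀ l, (Δ i).prec (Δ (j l)) := fun l => (hjrange (j l)).mpr ⟨l, rfl⟩
  have key : ∀ n : ℕ, ∀ hn : n < M,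
      f (j ⟨n, hn⟩) = if h : n = 0 then i else j ⟨n - 1, by omega⟩ := by
    intro n
    induction n using Nat.strong_induction_on with
    | _ n IH =>
      intro hn
      rcases hfin _ (hjX ⟨n, hn⟩) with h | ⟨hX, hlt⟩
      · rw [h]
        split
        · rfl
        · exfalso
          rename_i hn0
          have h0 := IH 0 (by omega) hM
          rw [dif_pos rfl] at h0
          have heq := hfinj (hjX ⟨n, hn⟩) (hjX ⟨0, hM⟩) (by rw [h, h0])
          have := hjanti.injective heq
          simp [Fin.ext_iff] at this
          omega
      · obtain ⟨l'', hl''⟩ := (hjrange _).mp hX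
        rw [← hl''] at hlt
        have hlt' : (l'' : ℕ) < n := by
          have := hjanti.lt_iff_gt.mp hlt
          simpa [Fin.lt_def] using this
        have hn0 : n ≠ 0 := by omega
        rw [dif_neg hn0, ← hl'']
        congr 1
        by_contra hne
        have hl1 : (l'' : ℕ) + 1 < n := by
          by_contra hge
          apply hne
          apply Fin.ext
          show (l'' : ℕ) = n - 1
          omega
        have hIH := IH ((l'' : ℕ) + 1) hl1 (by omega)
        rw [dif_neg (by omega)] at hIH
        simp only [Nat.add_sub_cancel, Fin.eta] at hIH
        have heq := hfinj (hjX ⟨(l'' : ℕ) + 1, by omega⟩) (hjX ⟨n, hn⟩)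
          (by rw [hIH, hl''])
        have := hjanti.injective heq
        simp [Fin.ext_iff] at this
        omega
  constructor
  · have := key 0 hM
    simpa using this
  · intro l h
    have := key (l + 1) h
    simpa using this
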